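/- Let B ⊆ ℝ² be a finite nonempty set of base-station locations, u ∈ ℝ² a user location with u ∉ B, h : ℝ² → ℝ_{>0} fading gains, b* ∈ B a serving base station, and l(·, R) the multi-slope pathloss function with all exponents α_j > 0. Define SIR(B, u, b*, R) = h(b*) l(‖b* - u‖, R) / Σ_{b ∈ B \ {b*}} h(b) l(‖b - u‖, R). Then for every k > 0, SIR(kB, ku, kb*, kR) = SIR(B, u, b*, R), where kB = {kb : b ∈ B} and the scaled network uses fading gains h'(kb) = h(b). -/

import Mathlib

open Finset

/-- Normalization constants of the multi-slope pathloss model. -/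
noncomputable def eta (R α : ℕ → ℝ) (j : ℕ) : ℝ :=
  ∏ ℓ ∈ Finset.Icc 2 j, R (ℓ - 1) ^ (α ℓ - α (ℓ - 1))

/-- Multi-slope pathloss function with boundaries `R` (convention `R 0 = 0`, `R n = ∞`,
the last piece having no upper bound) and exponents `α`. -/
noncomputable def pathloss (n : ℕ) (R α : ℕ → ℝ) (z : ℝ) : ℝ :=
  ∑ j ∈ Finset.Icc 1 n,
    if R (j - 1) < z ∧ (z ≤ R j ∨ j = n) then eta R α j * z ^ (-(α j)) else 0

lemma pathloss_scale (n : ℕ) (R α : ℕ → ℝ) (hR0 : R 0 = 0)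
    (hRmono : ∀ j, 1 ≤ j → j ≤ n - 1 → R (j - 1) < R j)
    (k : ℝ) (hk : 0 < k) (z : ℝ) :
    pathloss n (fun j => k * R j) α (k * z) = k ^ (-(α 1)) * pathloss n R α z := by
  have hRpos : ∀ i, 1 ≤ i → i ≤ n - 1 → 0 < R i := by
    intro i
    induction i with
    | zero => intro h1; omega
    | succ m ih =>
      intro _ hle
      rcases Nat.eq_zero_or_pos m with hm | hm
      · subst hm
        have := hRmono 1 le_rfl hle
        simpa [hR0] using this
      · have := hRmono (m + 1) (by omega) hle
        have hm' := ih hm (by omega)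
        simpa using hm'.trans this
  have hRnn : ∀ i, i ≤ n - 1 → 0 ≤ R i := by
    intro i hi
    rcases Nat.eq_zero_or_pos i with h0 | h0
    · simp [h0, hR0]
    · exact (hRpos i h0 hi).le
  have eta_scale : ∀ j, 1 ≤ j → j ≤ n →
      eta (fun i => k * R i) α j = k ^ (α j - α 1) * eta R α j := by
    intro j
    induction j with
    | zero => intro h1; omega
    | succ m ih =>
      intro _ hle
      rcases Nat.eq_zero_or_pos m with hm | hm
      · subst hm
        simp [eta]
      · have hRm : 0 < R m := hRpos m hm (by omega)
        have hstep : (2 : ℕ) ≤ m + 1 := by omega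
        have hrec : ∀ S : ℕ → ℝ, eta S α (m + 1) = eta S α m * S m ^ (α (m + 1) - α m) := by
          intro S
          unfold eta
          rw [Finset.prod_Icc_succ_top hstep]
          simp
        rw [hrec, hrec, ih hm (by omega)]
        rw [Real.mul_rpow hk.le hRm.le]
        rw [show k ^ (α m - α 1) * eta R α m * (k ^ (α (m + 1) - α m) * R m ^ (α (m + 1) - α m))
            = (k ^ (α m - α 1) * k ^ (α (m + 1) - α m)) * (eta R α m * R m ^ (α (m + 1) - α m))
          from by ring, ← Real.rpow_add hk]
        congr 2
        ring
  unfold pathloss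
  rw [Finset.mul_sum]
  apply Finset.sum_congr rfl
  intro j hj
  simp only [mem_Icc] at hj
  simp only [mul_lt_mul_iff_right₀ hk, mul_le_mul_iff_right₀ hk]
  split_ifs with hcond
  · have hz : 0 < z := by
      refine lt_of_le_of_lt ?_ hcond.1
      rcases Nat.eq_zero_or_pos (j - 1) with h0 | h0
      · simp [h0, hR0]
      · exact hRnn (j - 1) (by omega)
    rw [eta_scale j hj.1 hj.2, Real.mul_rpow hk.le hz.le,
      show k ^ (α j - α 1) * eta R α j * (k ^ (-α j) * z ^ (-α j))
        = (k ^ (α j - α 1) * k ^ (-α j)) * (eta R α j * z ^ (-α j)) from by ring,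
      ← Real.rpow_add hk]
    congr 2
    ring
  · simp

theorem stmt4 [DecidableEq (EuclideanSpace ℝ (Fin 2))] (n : ℕ) (hn : 1 ≤ n) (R α : ℕ → ℝ)
    (hR0 : R 0 = 0) (hRmono : ∀ j, 1 ≤ j → j ≤ n - 1 → R (j - 1) < R j)
    (hα : ∀ j, 1 ≤ j → j ≤ n → 0 < α j)
    (B : Finset (EuclideanSpace ℝ (Fin 2))) (hB : B.Nonempty)
    (u : EuclideanSpace ℝ (Fin 2)) (hu : u ∉ B)
    (h : EuclideanSpace ℝ (Fin 2) → ℝ) (hh : ∀ b, 0 < h b)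
    (bstar : EuclideanSpace ℝ (Fin 2)) (hbstar : bstar ∈ B)
    (k : ℝ) (hk : 0 < k) :
    (h (k⁻¹ • (k • bstar)) * pathloss n (fun j => k * R j) α ‖k • bstar - k • u‖) /
        ∑ b' ∈ (B.image (fun b => k • b)).erase (k • bstar),
          h (k⁻¹ • b') * pathloss n (fun j => k * R j) α ‖b' - k • u‖ =
      (h bstar * pathloss n R α ‖bstar - u‖) /
        ∑ b ∈ B.erase bstar, h b * pathloss n R α ‖b - u‖ := by
  have hinj : Function.Injective (fun b : EuclideanSpace ℝ (Fin 2) => k • b) :=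
    smul_right_injective _ hk.ne'
  have hnorm : ∀ b : EuclideanSpace ℝ (Fin 2), ‖k • b - k • u‖ = k * ‖b - u‖ := by
    intro b
    rw [← smul_sub, norm_smul, Real.norm_eq_abs, abs_of_pos hk]
  have hterm : ∀ b : EuclideanSpace ℝ (Fin 2),
      h (k⁻¹ • (k • b)) * pathloss n (fun j => k * R j) α ‖k • b - k • u‖
        = k ^ (-(α 1)) * (h b * pathloss n R α ‖b - u‖) := by
    intro b
    rw [inv_smul_smul₀ hk.ne', hnorm, pathloss_scale n R α hR0 hRmono k hk]
    ring
  have hsum : ∑ b' ∈ (B.image (fun b => k • b)).erase (k • bstar),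
      h (k⁻¹ • b') * pathloss n (fun j => k * R j) α ‖b' - k • u‖
      = k ^ (-(α 1)) * ∑ b ∈ B.erase bstar, h b * pathloss n R α ‖b - u‖ := by
    rw [← Finset.image_erase hinj, Finset.sum_image (fun a _ b _ hab => hinj hab),
      Finset.mul_sum]
    exact Finset.sum_congr rfl fun b _ => hterm b
  rw [hterm bstar, hsum, mul_div_mul_left _ _ (Real.rpow_pos_of_pos hk _).ne']
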